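/- Let Z be a set, F_0 : ℝ^d × Z → ℝ a measurable function with |F_0(w,z)| ≤ C for all w, z, and λ > 0, β > 0. For a dataset S = (z_1,…,z_n) ∈ Z^n define F_S(w) = (1/n)Σ_{i=1}^n F_0(w,z_i) + (λ/2)‖w‖₂², and let μ_S be the Gibbs probability measure on ℝ^d with density proportional to exp(−β F_S(w)). Suppose S, S' ∈ Z^n differ in exactly one data point and that 4βC/n < 1/2. Then the total variation distance satisfies TV(μ_S, μ_{S'}) ≤ 4βC/n. -/

import Mathlib

open MeasureTheory
open scoped ENNReal

/-- The Gibbs measure on `ℝ^d` with density proportional to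
`exp(−β F_S(w))`, where `F_S(w) = (1/n) Σ_i F₀(w, z_i) + (λ/2)‖w‖²`. -/
noncomputable def gibbsMeasure {Z : Type*} {d n : ℕ}
    (F₀ : EuclideanSpace ℝ (Fin d) → Z → ℝ) (lam β : ℝ) (S : Fin n → Z) :
    Measure (EuclideanSpace ℝ (Fin d)) :=
  (∫⁻ w, ENNReal.ofReal
      (Real.exp (-β * ((∑ i, F₀ w (S i)) / n + lam / 2 * ‖w‖ ^ 2))))⁻¹ •
    MeasureTheory.volume.withDensity fun w =>
      ENNReal.ofReal (Real.exp (-β * ((∑ i, F₀ w (S i)) / n + lam / 2 * ‖w‖ ^ 2)))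

private lemma gauss_integrable {d : ℕ} {b : ℝ} (hb : 0 < b) :
    Integrable (fun v : EuclideanSpace ℝ (Fin d) => Real.exp (-b * ‖v‖ ^ 2)) := by
  have h := (GaussianFourier.integrable_cexp_neg_mul_sq_norm_add
      (V := EuclideanSpace ℝ (Fin d)) (b := (b : ℂ)) (by simpa using hb) 0 0).norm
  simpa [Complex.norm_exp, neg_mul, ← Complex.ofReal_pow] using h

private lemma tv_arith {t p q : ℝ} (ht0 : 0 ≤ t) (ht12 : t < 1 / 2)
    (hp0 : 0 ≤ p) (hq0 : 0 ≤ q) (hp1 : p ≤ 1) (hq1 : q ≤ 1)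
    (hpq : p ≤ Real.exp t * q) (hqp : q ≤ Real.exp t * p) : |p - q| ≤ t := by
  have hEt1 : (1 - t) * Real.exp t ≤ 1 := by
    have h1 : -t + 1 ≤ Real.exp (-t) := Real.add_one_le_exp (-t)
    rw [Real.exp_neg] at h1
    have h3 : (1 - t) * Real.exp t ≤ (Real.exp t)⁻¹ * Real.exp t :=
      mul_le_mul_of_nonneg_right (by linarith) (Real.exp_pos t).le
    rwa [inv_mul_cancel₀ (Real.exp_ne_zero t)] at h3
  rw [abs_le]
  constructor
  · nlinarith [mul_le_mul_of_nonneg_left hqp (by linarith : (0:ℝ) ≤ 1 - t),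
      mul_le_mul_of_nonneg_right hEt1 hp0,
      mul_nonneg ht0 (sub_nonneg.mpr hq1)]
  · nlinarith [mul_le_mul_of_nonneg_left hpq (by linarith : (0:ℝ) ≤ 1 - t),
      mul_le_mul_of_nonneg_right hEt1 hq0,
      mul_nonneg ht0 (sub_nonneg.mpr hp1)]

/-- Total variation bound between the Gibbs measures of two neighboring datasets: if
`|F₀| ≤ C`, the datasets `S, S'` differ in exactly one data point, and `4βC/n < 1/2`,
then `TV(μ_S, μ_{S'}) ≤ 4βC/n`, i.e. `|μ_S(A) − μ_{S'}(A)| ≤ 4βC/n` for every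
measurable set `A`. -/
theorem gibbs_tv_neighboring_bound
    {Z : Type*} {d n : ℕ}
    (F₀ : EuclideanSpace ℝ (Fin d) → Z → ℝ)
    (hFmeas : ∀ z, Measurable fun w => F₀ w z)
    (C lam β : ℝ) (hFC : ∀ w z, |F₀ w z| ≤ C) (hlam : 0 < lam) (hβ : 0 < β)
    (S S' : Fin n → Z)
    (hne : ∃ i, S i ≠ S' i ∧ ∀ j, j ≠ i → S j = S' j)
    (hsmall : 4 * β * C / n < 1 / 2) :
    ∀ A : Set (EuclideanSpace ℝ (Fin d)), MeasurableSet A →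
      |(gibbsMeasure F₀ lam β S A).toReal - (gibbsMeasure F₀ lam β S' A).toReal| ≤
        4 * β * C / n := by
  intro A hA
  obtain ⟨i₀, hi₀ne, hi₀⟩ := hne
  have hn : 0 < n := i₀.pos
  have hnR : (0 : ℝ) < n := by exact_mod_cast hn
  have hC : 0 ≤ C := le_trans (abs_nonneg _) (hFC 0 (S i₀))
  set f : (Fin n → Z) → EuclideanSpace ℝ (Fin d) → ℝ :=
    fun T w => Real.exp (-β * ((∑ i, F₀ w (T i)) / n + lam / 2 * ‖w‖ ^ 2)) with hf
  -- measurability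
  have hfmeas : ∀ T : Fin n → Z, Measurable (f T) := by
    intro T
    have hsum : Measurable fun w => ∑ i, F₀ w (T i) :=
      Finset.measurable_sum _ fun i _ => hFmeas (T i)
    exact Real.measurable_exp.comp
      ((((hsum.div_const _).add ((measurable_norm.pow_const 2).const_mul _)).const_mul _))
  -- lower bound on the averaged sum
  have hbound : ∀ (T : Fin n → Z) (w : EuclideanSpace ℝ (Fin d)),
      -C ≤ (∑ i, F₀ w (T i)) / n := by
    intro T w
    rw [le_div_iff₀ hnR]
    have h1 : ∀ i ∈ Finset.univ, -C ≤ F₀ w (T i) := fun i _ =>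
      (neg_le_neg (hFC w (T i))).trans (neg_abs_le _)
    have := Finset.card_nsmul_le_sum Finset.univ (fun i => F₀ w (T i)) (-C) h1
    simpa [nsmul_eq_mul, mul_comm] using this
  -- integrability
  have hint : ∀ T : Fin n → Z, Integrable (f T) := by
    intro T
    apply Integrable.mono'
      ((gauss_integrable (d := d) (by positivity : 0 < β * lam / 2)).const_mul
        (Real.exp (β * C)))
    · exact (hfmeas T).aestronglyMeasurable
    · filter_upwards with w
      rw [Real.norm_eq_abs, abs_of_pos (Real.exp_pos _), ← Real.exp_add]
      apply Real.exp_le_exp.mpr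
      have := hbound T w
      nlinarith [hβ.le]
  have hfin : ∀ T : Fin n → Z, (∫⁻ w, ENNReal.ofReal (f T w)) ≠ ⊤ :=
    fun T => (hint T).lintegral_lt_top.ne
  have hposE : ∀ T : Fin n → Z, 0 < ∫⁻ w, ENNReal.ofReal (f T w) := by
    intro T
    rw [lintegral_pos_iff_support (hfmeas T).ennreal_ofReal]
    have hsupp : Function.support (fun w => ENNReal.ofReal (f T w)) = Set.univ :=
      Set.eq_univ_of_forall fun w => by
        simp [Function.mem_support, ENNReal.ofReal_eq_zero, not_le, hf, Real.exp_pos]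
    rw [hsupp]
    exact isOpen_univ.measure_pos _ Set.univ_nonempty
  set ε : ℝ := 2 * β * C / n with hε
  -- pointwise density ratio
  have hpt : ∀ (T T' : Fin n → Z), (∀ j, j ≠ i₀ → T j = T' j) →
      ∀ w, ENNReal.ofReal (f T w) ≤
        ENNReal.ofReal (Real.exp ε) * ENNReal.ofReal (f T' w) := by
    intro T T' h w
    rw [← ENNReal.ofReal_mul (Real.exp_nonneg _), ← Real.exp_add]
    apply ENNReal.ofReal_le_ofReal
    apply Real.exp_le_exp.mpr
    have hsum : (∑ i, F₀ w (T i)) - (∑ i, F₀ w (T' i)) =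
        F₀ w (T i₀) - F₀ w (T' i₀) := by
      rw [← Finset.sum_sub_distrib]
      exact Finset.sum_eq_single i₀ (fun j _ hj => by rw [h j hj]; ring)
        (fun hmem => absurd (Finset.mem_univ _) hmem)
    obtain ⟨hx1, hx2⟩ := abs_le.mp (hFC w (T i₀))
    obtain ⟨hy1, hy2⟩ := abs_le.mp (hFC w (T' i₀))
    have key : β * ((∑ i, F₀ w (T' i)) - (∑ i, F₀ w (T i))) ≤ 2 * β * C := by
      nlinarith [hβ.le]
    have key2 : β * ((∑ i, F₀ w (T' i)) - (∑ i, F₀ w (T i))) / n ≤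
        2 * β * C / n := (div_le_div_iff_of_pos_right hnR).mpr key
    rw [hε]
    have expand : -β * ((∑ i, F₀ w (T i)) / n + lam / 2 * ‖w‖ ^ 2) -
        (-β * ((∑ i, F₀ w (T' i)) / n + lam / 2 * ‖w‖ ^ 2)) =
        β * ((∑ i, F₀ w (T' i)) - (∑ i, F₀ w (T i))) / n := by ring
    linarith [key2, expand]
  -- integrated ratio over arbitrary sets
  have hlint : ∀ (T T' : Fin n → Z), (∀ j, j ≠ i₀ → T j = T' j) →
      ∀ B : Set (EuclideanSpace ℝ (Fin d)),
      (∫⁻ w in B, ENNReal.ofReal (f T w)) ≤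
        ENNReal.ofReal (Real.exp ε) * ∫⁻ w in B, ENNReal.ofReal (f T' w) := by
    intro T T' h B
    rw [← lintegral_const_mul _ (hfmeas T').ennreal_ofReal]
    exact lintegral_mono fun w => hpt T T' h w
  have hrestr : ∀ (T : Fin n → Z) (B : Set (EuclideanSpace ℝ (Fin d))),
      (∫⁻ w in B, ENNReal.ofReal (f T w)) ≤ ∫⁻ w, ENNReal.ofReal (f T w) :=
    fun T B => lintegral_mono' Measure.restrict_le_self le_rfl
  have hZAfin : ∀ T : Fin n → Z, (∫⁻ w in A, ENNReal.ofReal (f T w)) ≠ ⊤ :=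
    fun T => ((hrestr T A).trans_lt (lt_top_iff_ne_top.mpr (hfin T))).ne
  -- formula for the measure of A
  have happ : ∀ T : Fin n → Z, (gibbsMeasure F₀ lam β T A).toReal =
      (∫⁻ w in A, ENNReal.ofReal (f T w)).toReal /
        (∫⁻ w, ENNReal.ofReal (f T w)).toReal := by
    intro T
    simp only [hf, gibbsMeasure, Measure.smul_apply, withDensity_apply _ hA, smul_eq_mul,
      ENNReal.toReal_mul, ENNReal.toReal_inv]
    ring
  rw [happ S, happ S']
  set t : ℝ := 4 * β * C / n with ht
  have hε2 : ε + ε = t := by rw [hε, ht]; ring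
  set a := (∫⁻ w in A, ENNReal.ofReal (f S w)).toReal with ha'
  set b := (∫⁻ w, ENNReal.ofReal (f S w)).toReal with hb'
  set a' := (∫⁻ w in A, ENNReal.ofReal (f S' w)).toReal with ha''
  set b' := (∫⁻ w, ENNReal.ofReal (f S' w)).toReal with hb''
  have hi₀' : ∀ j, j ≠ i₀ → S' j = S j := fun j hj => (hi₀ j hj).symm
  have hbpos : 0 < b := ENNReal.toReal_pos (hposE S).ne' (hfin S)
  have hb'pos : 0 < b' := ENNReal.toReal_pos (hposE S').ne' (hfin S')
  have ha0 : 0 ≤ a := ENNReal.toReal_nonneg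
  have ha'0 : 0 ≤ a' := ENNReal.toReal_nonneg
  have hab : a ≤ b := ENNReal.toReal_mono (hfin S) (hrestr S A)
  have ha'b' : a' ≤ b' := ENNReal.toReal_mono (hfin S') (hrestr S' A)
  -- transfer the ENNReal comparisons to the reals
  have htoReal : ∀ (x y : ℝ≥0∞), y ≠ ⊤ → x ≤ ENNReal.ofReal (Real.exp ε) * y →
      x.toReal ≤ Real.exp ε * y.toReal := by
    intro x y hy hxy
    have := ENNReal.toReal_mono (ENNReal.mul_ne_top ENNReal.ofReal_ne_top hy) hxy
    rwa [ENNReal.toReal_mul, ENNReal.toReal_ofReal (Real.exp_nonneg _)] at this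
  have haE : a ≤ Real.exp ε * a' := htoReal _ _ (hZAfin S') (hlint S S' hi₀ A)
  have ha'E : a' ≤ Real.exp ε * a := htoReal _ _ (hZAfin S) (hlint S' S hi₀' A)
  have hbE : b ≤ Real.exp ε * b' := by
    refine htoReal _ _ (hfin S') ?_
    have := hlint S S' hi₀ Set.univ
    rwa [setLIntegral_univ, setLIntegral_univ] at this
  have hb'E : b' ≤ Real.exp ε * b := by
    refine htoReal _ _ (hfin S) ?_
    have := hlint S' S hi₀' Set.univ
    rwa [setLIntegral_univ, setLIntegral_univ] at this
  -- ratio comparison for the normalized masses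
  have hratio : ∀ (x y u v : ℝ), 0 ≤ x → 0 < y → 0 ≤ u → 0 < v →
      x ≤ Real.exp ε * u → v ≤ Real.exp ε * y → x / y ≤ Real.exp t * (u / v) := by
    intro x y u v hx hy hu hv hxu hvy
    have h1 : x / y ≤ (Real.exp ε * u) / (v / Real.exp ε) := by
      apply div_le_div₀ (by positivity) hxu (by positivity)
      rw [div_le_iff₀ (Real.exp_pos _)]
      linarith [hvy]
    have h2 : (Real.exp ε * u) / (v / Real.exp ε) = (Real.exp ε * Real.exp ε) * (u / v) := by
      field_simp
    rw [h2, ← Real.exp_add, hε2] at h1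
    exact h1
  have hpq : a / b ≤ Real.exp t * (a' / b') := hratio a b a' b' ha0 hbpos ha'0 hb'pos haE hb'E
  have hqp : a' / b' ≤ Real.exp t * (a / b) := hratio a' b' a b ha'0 hb'pos ha0 hbpos ha'E hbE
  have hp1 : a / b ≤ 1 := (div_le_one hbpos).mpr hab
  have hq1 : a' / b' ≤ 1 := (div_le_one hb'pos).mpr ha'b'
  have hp0 : 0 ≤ a / b := by positivity
  have hq0 : 0 ≤ a' / b' := by positivity
  have ht0 : 0 ≤ t := by rw [ht]; positivity
  exact tv_arith ht0 hsmall hp0 hq0 hp1 hq1 hpq hqp
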